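/- For all real numbers t > 0, all integers n ≥ 0, and all real r > 0, one has t^((n+1)/(n+2)) ≤ e^(r+2) · t + (n+1)^(-(r+2)). -/

import Mathlib

theorem stmt_0 (t : ℝ) (ht : 0 < t) (n : ℕ) (r : ℝ) (hr : 0 < r) :
    t ^ (((n : ℝ) + 1) / ((n : ℝ) + 2)) ≤
      Real.exp (r + 2) * t + ((n : ℝ) + 1) ^ (-(r + 2)) := by
  set s := r + 2 with hs
  have hs0 : 0 < s := by positivity
  have hn2 : (0:ℝ) < (n:ℝ) + 2 := by positivity
  have hn1 : (0:ℝ) < (n:ℝ) + 1 := by positivity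
  set α := ((n : ℝ) + 1) / ((n : ℝ) + 2) with hα
  have hα0 : 0 < α := by positivity
  rcases le_total (Real.exp (-(s * ((n:ℝ) + 2)))) t with h | h
  · -- t^α ≤ exp s * t
    have key : t ^ α ≤ Real.exp s * t := by
      have h1 : t ^ α = t ^ (α - 1) * t := by
        rw [← Real.rpow_add_one ht.ne']; ring_nf
      rw [h1]
      have h2 : α - 1 = -(1 / ((n:ℝ) + 2)) := by
        rw [hα]; field_simp; norm_num
      have h3 : t ^ (α - 1) ≤ Real.exp s := by
        rw [h2]
        have := Real.rpow_le_rpow_of_nonpos (Real.exp_pos _) h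
          (by rw [neg_nonpos]; positivity : -(1 / ((n:ℝ) + 2)) ≤ 0)
        calc t ^ (-(1 / ((n:ℝ) + 2)))
            ≤ Real.exp (-(s * ((n:ℝ) + 2))) ^ (-(1 / ((n:ℝ) + 2))) := this
          _ = Real.exp s := by
              rw [← Real.exp_mul]
              congr 1
              field_simp
      exact mul_le_mul_of_nonneg_right h3 ht.le
    calc t ^ α ≤ Real.exp s * t := key
      _ ≤ Real.exp s * t + ((n:ℝ) + 1) ^ (-s) := le_add_of_nonneg_right (by positivity)
  · -- t^α ≤ (n+1)^(-s)
    have key : t ^ α ≤ ((n:ℝ) + 1) ^ (-s) := by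
      calc t ^ α ≤ Real.exp (-(s * ((n:ℝ) + 2))) ^ α :=
            Real.rpow_le_rpow ht.le h hα0.le
        _ = Real.exp (-(s * ((n:ℝ) + 1))) := by
            rw [← Real.exp_mul]
            congr 1
            rw [hα]
            field_simp
        _ ≤ ((n:ℝ) + 1) ^ (-s) := by
            rw [Real.rpow_def_of_pos hn1]
            apply Real.exp_le_exp.mpr
            have hlog : Real.log ((n:ℝ) + 1) ≤ (n:ℝ) + 1 :=
              (Real.log_le_sub_one_of_pos hn1).trans (by linarith)
            nlinarith [hlog, hs0]
    calc t ^ α ≤ ((n:ℝ) + 1) ^ (-s) := key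
      _ ≤ Real.exp s * t + ((n:ℝ) + 1) ^ (-s) := le_add_of_nonneg_left (by positivity)
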